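/- arXiv:1904.02562 — 2 statements merged into one kernel-verified Lean document; each statement's English description precedes it below -/
import Mathlib

section
/- The second primary Cartan invariant V₀ of the model M_LC vanishes identically: on Ω = {z₂ζ₂ ≠ 1}, the function V₀ := −(1/3)·ℒ̄₁(ℒ̄₁(ℒ̄₁(k)))/ℒ̄₁(k) + (5/9)·(ℒ̄₁(ℒ̄₁(k))/ℒ̄₁(k))² − (1/9)·(ℒ̄₁(ℒ̄₁(k))/ℒ̄₁(k))·P̄ + (1/3)·ℒ̄₁(P̄) − (1/9)·P̄² is identically zero. -/
open Complex

noncomputable section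

/-- Partial derivative with respect to `z₁`, the first coordinate of `(z₁, z₂, ζ₁, ζ₂) ∈ ℂ⁴`. -/
def pz1 (G : ℂ × ℂ × ℂ × ℂ → ℂ) (q : ℂ × ℂ × ℂ × ℂ) : ℂ :=
  deriv (fun s => G (s, q.2.1, q.2.2.1, q.2.2.2)) q.1

/-- Partial derivative with respect to `ζ₁`. -/
def pc1 (G : ℂ × ℂ × ℂ × ℂ → ℂ) (q : ℂ × ℂ × ℂ × ℂ) : ℂ :=
  deriv (fun s => G (q.1, q.2.1, s, q.2.2.2)) q.2.2.1

/-- The polarized graphing function of the model `M_LC`: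
`F(z₁, z₂, ζ₁, ζ₂) = (z₁ζ₁ + ½z₁²ζ₂ + ½ζ₁²z₂)/(1 − z₂ζ₂)`. -/
def Fmod : ℂ × ℂ × ℂ × ℂ → ℂ := fun q =>
  (q.1 * q.2.2.1 + (1 / 2) * q.1 ^ 2 * q.2.2.2 + (1 / 2) * q.2.2.1 ^ 2 * q.2.1)
    / (1 - q.2.1 * q.2.2.2)

/-- The slant function of the model: `k = −(ζ₁ + z₁ζ₂)/(1 − z₂ζ₂)`. -/
def kmod : ℂ × ℂ × ℂ × ℂ → ℂ := fun q =>
  -((q.2.2.1 + q.1 * q.2.2.2) / (1 - q.2.1 * q.2.2.2))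

/-- The function `P̄ = F_{ζ₁ζ₁z₁}/F_{z₁ζ₁}` of the model. -/
def Pbarmod : ℂ × ℂ × ℂ × ℂ → ℂ := fun q =>
  pz1 (pc1 (pc1 Fmod)) q / pc1 (pz1 Fmod) q

/-- The second primary Cartan invariant `V₀` of the model `M_LC`, with `ℒ̄₁ = ∂_{ζ₁}`. -/
def V0mod : ℂ × ℂ × ℂ × ℂ → ℂ := fun q =>
  -(1 / 3) * pc1 (pc1 (pc1 kmod)) q / pc1 kmod q
    + (5 / 9) * (pc1 (pc1 kmod) q / pc1 kmod q) ^ 2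
    - (1 / 9) * (pc1 (pc1 kmod) q / pc1 kmod q) * Pbarmod q
    + (1 / 3) * pc1 Pbarmod q
    - (1 / 9) * Pbarmod q ^ 2

lemma quad_deriv (a b c d x : ℂ) :
    deriv (fun s => (a + b*s + c*s^2)/d) x = (b + 2*c*x)/d := by
  have h1 : HasDerivAt (fun s : ℂ => a + b*s + c*s^2) (b + 2*c*x) x := by
    have hb := (hasDerivAt_id x).const_mul b
    have hc := (hasDerivAt_pow 2 x).const_mul c
    have h : HasDerivAt (fun s : ℂ => a + b*s + c*s^2) _ x := (hb.const_add a).add hc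
    convert h using 1
    simp; ring
  exact (h1.div_const d).deriv

lemma pc1_F (q : ℂ × ℂ × ℂ × ℂ) :
    pc1 Fmod q = (q.1 + q.2.2.1 * q.2.1) / (1 - q.2.1 * q.2.2.2) := by
  have hfun : (fun s => Fmod (q.1, q.2.1, s, q.2.2.2))
      = fun s => ((1/2)*q.1^2*q.2.2.2 + q.1*s + ((1/2)*q.2.1)*s^2)/(1 - q.2.1*q.2.2.2) := by
    funext s; simp only [Fmod]; ring_nf
  rw [pc1, hfun, quad_deriv]; ring

lemma pc1_pc1_F (q : ℂ × ℂ × ℂ × ℂ) :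
    pc1 (pc1 Fmod) q = q.2.1 / (1 - q.2.1 * q.2.2.2) := by
  have hfun : (fun s => pc1 Fmod (q.1, q.2.1, s, q.2.2.2))
      = fun s => (q.1 + q.2.1*s + (0:ℂ)*s^2)/(1 - q.2.1*q.2.2.2) := by
    funext s; rw [pc1_F]; ring_nf
  rw [pc1, hfun, quad_deriv]; ring

lemma pz1_pc1_pc1_F (q : ℂ × ℂ × ℂ × ℂ) :
    pz1 (pc1 (pc1 Fmod)) q = 0 := by
  have hfun : (fun s => pc1 (pc1 Fmod) (s, q.2.1, q.2.2.1, q.2.2.2))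
      = fun _ => q.2.1 / (1 - q.2.1 * q.2.2.2) := by
    funext s; rw [pc1_pc1_F]
  rw [pz1, hfun, deriv_const]

lemma Pbar_eq (q : ℂ × ℂ × ℂ × ℂ) : Pbarmod q = 0 := by
  rw [Pbarmod, pz1_pc1_pc1_F, zero_div]

lemma pc1_Pbar (q : ℂ × ℂ × ℂ × ℂ) : pc1 Pbarmod q = 0 := by
  have hfun : (fun s => Pbarmod (q.1, q.2.1, s, q.2.2.2)) = fun _ => (0:ℂ) := by
    funext s; rw [Pbar_eq]
  rw [pc1, hfun, deriv_const]

lemma pc1_k (q : ℂ × ℂ × ℂ × ℂ) :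
    pc1 kmod q = -(1 / (1 - q.2.1 * q.2.2.2)) := by
  have hfun : (fun s => kmod (q.1, q.2.1, s, q.2.2.2))
      = fun s => (-(q.1*q.2.2.2) + (-1)*s + (0:ℂ)*s^2)/(1 - q.2.1*q.2.2.2) := by
    funext s; simp only [kmod]; ring_nf
  rw [pc1, hfun, quad_deriv]; ring

lemma pc1_pc1_k (q : ℂ × ℂ × ℂ × ℂ) : pc1 (pc1 kmod) q = 0 := by
  have hfun : (fun s => pc1 kmod (q.1, q.2.1, s, q.2.2.2))
      = fun _ => -(1 / (1 - q.2.1 * q.2.2.2)) := by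
    funext s; rw [pc1_k]
  rw [pc1, hfun, deriv_const]

lemma pc1_pc1_pc1_k (q : ℂ × ℂ × ℂ × ℂ) : pc1 (pc1 (pc1 kmod)) q = 0 := by
  have hfun : (fun s => pc1 (pc1 kmod) (q.1, q.2.1, s, q.2.2.2)) = fun _ => (0:ℂ) := by
    funext s; rw [pc1_pc1_k]
  rw [pc1, hfun, deriv_const]

/-- The second primary Cartan invariant `V₀` of the model `M_LC` vanishes identically
on `Ω = {z₂ζ₂ ≠ 1}`. -/
theorem V0_model_vanishes (q : ℂ × ℂ × ℂ × ℂ) (hq : q.2.1 * q.2.2.2 ≠ 1) :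
    V0mod q = 0 := by
  simp [V0mod, pc1_pc1_pc1_k, pc1_pc1_k, Pbar_eq, pc1_Pbar]
end
end

section
/- (Involutivity of the Levi kernel with its conjugate, rigid case; identity [𝒦, 𝒦̄] ≡ 0 from (2.9).) In the polarized setting, if F is holomorphic on Ω ⊆ ℂ⁴, F_{z₁ζ₁} vanishes nowhere on Ω, and the constant Levi rank 1 identity F_{z₁ζ₁}F_{z₂ζ₂} − F_{z₂ζ₁}F_{z₁ζ₂} ≡ 0 holds on Ω, then the vector fields on Ω × ℂ satisfy [𝒦, 𝒦̄] = 0, where 𝒦 := k ℒ₁ + ℒ₂ and 𝒦̄ := k̄ ℒ̄₁ + ℒ̄₂. -/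
open Complex
open Topology Filter

noncomputable section

/-- Partial derivative with respect to `z₂`. -/
def pz2 (G : ℂ × ℂ × ℂ × ℂ → ℂ) (q : ℂ × ℂ × ℂ × ℂ) : ℂ :=
  deriv (fun s => G (q.1, s, q.2.2.1, q.2.2.2)) q.2.1

/-- Partial derivative with respect to `ζ₂`. -/
def pc2 (G : ℂ × ℂ × ℂ × ℂ → ℂ) (q : ℂ × ℂ × ℂ × ℂ) : ℂ :=
  deriv (fun s => G (q.1, q.2.1, q.2.2.1, s)) q.2.2.2

lemma pz1_eq {G : ℂ × ℂ × ℂ × ℂ → ℂ} {q : ℂ × ℂ × ℂ × ℂ} (hG : DifferentiableAt ℂ G q) :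
    pz1 G q = fderiv ℂ G q (1, 0, 0, 0) := by
  have hin : HasDerivAt (fun s : ℂ => ((s, q.2.1, q.2.2.1, q.2.2.2) : ℂ × ℂ × ℂ × ℂ))
      ((1 : ℂ), (0 : ℂ), (0 : ℂ), (0 : ℂ)) q.1 :=
    HasDerivAt.prodMk (hasDerivAt_id q.1) (hasDerivAt_const _ _)
  exact (hG.hasFDerivAt.comp_hasDerivAt q.1 hin).deriv

lemma pz2_eq {G : ℂ × ℂ × ℂ × ℂ → ℂ} {q : ℂ × ℂ × ℂ × ℂ} (hG : DifferentiableAt ℂ G q) :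
    pz2 G q = fderiv ℂ G q (0, 1, 0, 0) := by
  have hin : HasDerivAt (fun s : ℂ => ((q.1, s, q.2.2.1, q.2.2.2) : ℂ × ℂ × ℂ × ℂ))
      ((0 : ℂ), (1 : ℂ), (0 : ℂ), (0 : ℂ)) q.2.1 :=
    HasDerivAt.prodMk (hasDerivAt_const _ _) (HasDerivAt.prodMk (hasDerivAt_id q.2.1) (hasDerivAt_const _ _))
  exact (hG.hasFDerivAt.comp_hasDerivAt q.2.1 hin).deriv

lemma pc1_eq {G : ℂ × ℂ × ℂ × ℂ → ℂ} {q : ℂ × ℂ × ℂ × ℂ} (hG : DifferentiableAt ℂ G q) :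
    pc1 G q = fderiv ℂ G q (0, 0, 1, 0) := by
  have hin : HasDerivAt (fun s : ℂ => ((q.1, q.2.1, s, q.2.2.2) : ℂ × ℂ × ℂ × ℂ))
      ((0 : ℂ), (0 : ℂ), (1 : ℂ), (0 : ℂ)) q.2.2.1 :=
    HasDerivAt.prodMk (hasDerivAt_const _ _) (HasDerivAt.prodMk (hasDerivAt_const _ _)
      (HasDerivAt.prodMk (hasDerivAt_id q.2.2.1) (hasDerivAt_const _ _)))
  exact (hG.hasFDerivAt.comp_hasDerivAt q.2.2.1 hin).deriv

lemma pc2_eq {G : ℂ × ℂ × ℂ × ℂ → ℂ} {q : ℂ × ℂ × ℂ × ℂ} (hG : DifferentiableAt ℂ G q) :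
    pc2 G q = fderiv ℂ G q (0, 0, 0, 1) := by
  have hin : HasDerivAt (fun s : ℂ => ((q.1, q.2.1, q.2.2.1, s) : ℂ × ℂ × ℂ × ℂ))
      ((0 : ℂ), (0 : ℂ), (0 : ℂ), (1 : ℂ)) q.2.2.2 :=
    HasDerivAt.prodMk (hasDerivAt_const _ _) (HasDerivAt.prodMk (hasDerivAt_const _ _)
      (HasDerivAt.prodMk (hasDerivAt_const _ _) (hasDerivAt_id q.2.2.2)))
  exact (hG.hasFDerivAt.comp_hasDerivAt q.2.2.2 hin).deriv

lemma fderiv_clm_apply_const {M : Type*} [NormedAddCommGroup M] [NormedSpace ℂ M]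
    {c : ℂ × ℂ × ℂ × ℂ → ((ℂ × ℂ × ℂ × ℂ) →L[ℂ] M)} {q : ℂ × ℂ × ℂ × ℂ}
    (hc : DifferentiableAt ℂ c q) (a u : ℂ × ℂ × ℂ × ℂ) :
    fderiv ℂ (fun y => c y a) q u = fderiv ℂ c q u a := by
  rw [fderiv_clm_apply hc (differentiableAt_const a)]
  simp

lemma partial_partial_eq {Ω : Set (ℂ × ℂ × ℂ × ℂ)} (hΩ : IsOpen Ω) {F : ℂ × ℂ × ℂ × ℂ → ℂ}
    (hF : AnalyticOnNhd ℂ F Ω)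
    (P1 P2 : (ℂ × ℂ × ℂ × ℂ → ℂ) → ℂ × ℂ × ℂ × ℂ → ℂ) (u1 u2 : ℂ × ℂ × ℂ × ℂ)
    (h1 : ∀ (G : ℂ × ℂ × ℂ × ℂ → ℂ) (y : ℂ × ℂ × ℂ × ℂ),
      DifferentiableAt ℂ G y → P1 G y = fderiv ℂ G y u1)
    (h2 : ∀ (G : ℂ × ℂ × ℂ × ℂ → ℂ) (y : ℂ × ℂ × ℂ × ℂ),
      DifferentiableAt ℂ G y → P2 G y = fderiv ℂ G y u2)
    {q : ℂ × ℂ × ℂ × ℂ} (hq : q ∈ Ω) :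
    P2 (P1 F) q = fderiv ℂ (fderiv ℂ F) q u2 u1 := by
  have hΦa := hF.fderiv
  have heq : P1 F =ᶠ[𝓝 q] fun y => fderiv ℂ F y u1 := by
    filter_upwards [hΩ.mem_nhds hq] with y hy using h1 F y (hF y hy).differentiableAt
  have hd : DifferentiableAt ℂ (fun y => fderiv ℂ F y u1) q :=
    (hΦa q hq).differentiableAt.clm_apply (differentiableAt_const u1)
  rw [h2 _ _ (heq.differentiableAt_iff.mpr hd), heq.fderiv_eq,
    fderiv_clm_apply_const (hΦa q hq).differentiableAt u1 u2]

private lemma alg1 (A B C D a b c d x kb : ℂ) (hA : A ≠ 0)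
    (hL : A * D - B * C = 0)
    (hkb : kb = -C * A⁻¹)
    (hrel : a * D + A * d - (b * C + B * c) = 0)
    (h : (-B * A⁻¹) * (kb * a + c) + A * x = -(kb * b + d)) :
    x = 0 := by
  subst hkb
  field_simp at h
  have h4 : A^4 * x = 0 := by linear_combination A*h + A*a*hL - A^2*hrel
  have := mul_eq_zero.mp h4
  rcases this with h' | h'
  · exact absurd h' (pow_ne_zero 4 hA)
  · exact h'

private lemma alg2 (A B C D a b c d x : ℂ) (hA : A ≠ 0)
    (hL : A * D - B * C = 0)
    (hrel : a * D + A * d - (b * C + B * c) = 0)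
    (h : (-C * A⁻¹) * ((-B * A⁻¹) * a + b) + A * x = -((-B * A⁻¹) * c + d)) :
    x = 0 := by
  field_simp at h
  have h4 : A^4 * x = 0 := by linear_combination A*h + A*a*hL - A^2*hrel
  rcases mul_eq_zero.mp h4 with h' | h'
  · exact absurd h' (pow_ne_zero 4 hA)
  · exact h'

private lemma alg3 (A B C D : ℂ) (hA : A ≠ 0) (hL : A * D - B * C = 0) :
    (-B * A⁻¹) * ((-C * A⁻¹) * A + C) + ((-C * A⁻¹) * B + D) = 0 := by
  field_simp
  linear_combination hL

private lemma alg4 (A B C D : ℂ) (hA : A ≠ 0) (hL : A * D - B * C = 0) :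
    (-C * A⁻¹) * ((-B * A⁻¹) * A + B) + ((-B * A⁻¹) * C + D) = 0 := by
  field_simp
  linear_combination hL


set_option maxHeartbeats 1000000 in
/-- Involutivity of the Levi kernel with its conjugate in the rigid case: `[𝒦, 𝒦̄] ≡ 0` on
`Ω × ℂ ⊆ ℂ⁴ × ℂ` (last coordinate `v`), where `𝒦 = kℒ₁ + ℒ₂`, `𝒦̄ = k̄ℒ̄₁ + ℒ̄₂`, with
`ℒ₁ = ∂_{z₁} − iF_{z₁}∂_v`, `ℒ₂ = ∂_{z₂} − iF_{z₂}∂_v`, `ℒ̄₁ = ∂_{ζ₁} + iF_{ζ₁}∂_v`,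
`ℒ̄₂ = ∂_{ζ₂} + iF_{ζ₂}∂_v`, `k = −F_{z₂ζ₁}/F_{z₁ζ₁}`, `k̄ = −F_{z₁ζ₂}/F_{z₁ζ₁}`, under
the constant Levi rank 1 hypothesis. -/
theorem bracket_K_Kbar_vanishes (Ω : Set (ℂ × ℂ × ℂ × ℂ)) (hΩ : IsOpen Ω)
    (F : ℂ × ℂ × ℂ × ℂ → ℂ) (hF : AnalyticOnNhd ℂ F Ω)
    (hne : ∀ q ∈ Ω, pc1 (pz1 F) q ≠ 0)
    (hLevi : ∀ q ∈ Ω, pc1 (pz1 F) q * pc2 (pz2 F) q - pc1 (pz2 F) q * pc2 (pz1 F) q = 0)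
    (k kbar : ℂ × ℂ × ℂ × ℂ → ℂ)
    (hk : k = fun q => -(pc1 (pz2 F) q) / pc1 (pz1 F) q)
    (hkbar : kbar = fun q => -(pc2 (pz1 F) q) / pc1 (pz1 F) q)
    (L1 L2 L1bar L2bar K Kbar : (ℂ × ℂ × ℂ × ℂ) × ℂ → (ℂ × ℂ × ℂ × ℂ) × ℂ)
    (hL1 : L1 = fun p => (((1 : ℂ), (0 : ℂ), (0 : ℂ), (0 : ℂ)), -I * pz1 F p.1))
    (hL2 : L2 = fun p => (((0 : ℂ), (1 : ℂ), (0 : ℂ), (0 : ℂ)), -I * pz2 F p.1))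
    (hL1bar : L1bar = fun p => (((0 : ℂ), (0 : ℂ), (1 : ℂ), (0 : ℂ)), I * pc1 F p.1))
    (hL2bar : L2bar = fun p => (((0 : ℂ), (0 : ℂ), (0 : ℂ), (1 : ℂ)), I * pc2 F p.1))
    (hK : K = fun p => k p.1 • L1 p + L2 p)
    (hKbar : Kbar = fun p => kbar p.1 • L1bar p + L2bar p) :
    ∀ p : (ℂ × ℂ × ℂ × ℂ) × ℂ, p.1 ∈ Ω →
      VectorField.lieBracket ℂ K Kbar p = 0 := by
  intro p hp
  obtain ⟨q, t⟩ := p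
  replace hp : q ∈ Ω := hp
  set Φ := fderiv ℂ F with hΦdef
  set Ψ := fderiv ℂ Φ with hΨdef
  set Θ := fderiv ℂ Ψ with hΘdef
  set e1 : ℂ × ℂ × ℂ × ℂ := (1, 0, 0, 0) with he1
  set e2 : ℂ × ℂ × ℂ × ℂ := (0, 1, 0, 0) with he2
  set e3 : ℂ × ℂ × ℂ × ℂ := (0, 0, 1, 0) with he3
  set e4 : ℂ × ℂ × ℂ × ℂ := (0, 0, 0, 1) with he4
  have hqn : Ω ∈ 𝓝 q := hΩ.mem_nhds hp
  have hΦa : AnalyticOnNhd ℂ Φ Ω := hF.fderiv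
  have hΨa : AnalyticOnNhd ℂ Ψ Ω := hΦa.fderiv
  have hFd : ∀ y ∈ Ω, DifferentiableAt ℂ F y := fun y hy => (hF y hy).differentiableAt
  have hΦd : ∀ y ∈ Ω, DifferentiableAt ℂ Φ y := fun y hy => (hΦa y hy).differentiableAt
  have hΨd : ∀ y ∈ Ω, DifferentiableAt ℂ Ψ y := fun y hy => (hΨa y hy).differentiableAt
  have hΦad : ∀ (a : ℂ × ℂ × ℂ × ℂ), ∀ y ∈ Ω, DifferentiableAt ℂ (fun z => Φ z a) y :=
    fun a y hy => (hΦd y hy).clm_apply (differentiableAt_const a)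
  have hΨad : ∀ (a b : ℂ × ℂ × ℂ × ℂ), ∀ y ∈ Ω, DifferentiableAt ℂ (fun z => Ψ z a b) y :=
    fun a b y hy =>
      ((hΨd y hy).clm_apply (differentiableAt_const a)).clm_apply (differentiableAt_const b)
  have hp1 : ∀ y ∈ Ω, pz1 F y = Φ y e1 := fun y hy => pz1_eq (hFd y hy)
  have hp2 : ∀ y ∈ Ω, pz2 F y = Φ y e2 := fun y hy => pz2_eq (hFd y hy)
  have hp3 : ∀ y ∈ Ω, pc1 F y = Φ y e3 := fun y hy => pc1_eq (hFd y hy)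
  have hp4 : ∀ y ∈ Ω, pc2 F y = Φ y e4 := fun y hy => pc2_eq (hFd y hy)
  have hA : ∀ y ∈ Ω, pc1 (pz1 F) y = Ψ y e3 e1 := fun y hy =>
    partial_partial_eq hΩ hF pz1 pc1 e1 e3 (fun G y h => pz1_eq h) (fun G y h => pc1_eq h) hy
  have hB : ∀ y ∈ Ω, pc1 (pz2 F) y = Ψ y e3 e2 := fun y hy =>
    partial_partial_eq hΩ hF pz2 pc1 e2 e3 (fun G y h => pz2_eq h) (fun G y h => pc1_eq h) hy
  have hC : ∀ y ∈ Ω, pc2 (pz1 F) y = Ψ y e4 e1 := fun y hy =>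
    partial_partial_eq hΩ hF pz1 pc2 e1 e4 (fun G y h => pz1_eq h) (fun G y h => pc2_eq h) hy
  have hD : ∀ y ∈ Ω, pc2 (pz2 F) y = Ψ y e4 e2 := fun y hy =>
    partial_partial_eq hΩ hF pz2 pc2 e2 e4 (fun G y h => pz2_eq h) (fun G y h => pc2_eq h) hy
  have dir1 : ∀ (a u : ℂ × ℂ × ℂ × ℂ), fderiv ℂ (fun y => Φ y a) q u = Ψ q u a :=
    fun a u => fderiv_clm_apply_const (hΦd q hp) a u
  have dir2 : ∀ (a b u : ℂ × ℂ × ℂ × ℂ), fderiv ℂ (fun y => Ψ y a b) q u = Θ q u a b := by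
    intro a b u
    have hc : DifferentiableAt ℂ (fun z => Ψ z a) q :=
      (hΨd q hp).clm_apply (differentiableAt_const a)
    have h2 : fderiv ℂ (fun y => Ψ y a) q u = Θ q u a :=
      fderiv_clm_apply_const (hΨd q hp) a u
    calc fderiv ℂ (fun y => Ψ y a b) q u
        = fderiv ℂ (fun y => Ψ y a) q u b := fderiv_clm_apply_const hc b u
      _ = Θ q u a b := by rw [h2]
  have S2 : ∀ y ∈ Ω, ∀ a b, Ψ y a b = Ψ y b a := by
    intro y hy a b
    exact second_derivative_symmetric_of_eventually
      (by filter_upwards [hΩ.mem_nhds hy] with z hz using (hFd z hz).hasFDerivAt)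
      (hΦd y hy).hasFDerivAt a b
  have S3a : ∀ a b c, Θ q a b c = Θ q b a c := by
    intro a b c
    have h := second_derivative_symmetric_of_eventually
      (by filter_upwards [hqn] with z hz using (hΦd z hz).hasFDerivAt)
      (hΨd q hp).hasFDerivAt a b
    exact congrArg (fun L => L c) h
  have S3b : ∀ u a b, Θ q u a b = Θ q u b a := by
    intro u a b
    have hev : (fun y => Ψ y a b) =ᶠ[𝓝 q] (fun y => Ψ y b a) := by
      filter_upwards [hqn] with z hz using S2 z hz a b
    calc Θ q u a b = fderiv ℂ (fun y => Ψ y a b) q u := (dir2 a b u).symm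
      _ = fderiv ℂ (fun y => Ψ y b a) q u := by rw [hev.fderiv_eq]
      _ = Θ q u b a := dir2 b a u
  have hA0 : Ψ q e3 e1 ≠ 0 := by have := hne q hp; rwa [hA q hp] at this
  have hLev : Ψ q e3 e1 * Ψ q e4 e2 - Ψ q e3 e2 * Ψ q e4 e1 = 0 := by
    have := hLevi q hp; rwa [hA q hp, hB q hp, hC q hp, hD q hp] at this
  have hRel : ∀ u, Θ q u e3 e1 * Ψ q e4 e2 + Ψ q e3 e1 * Θ q u e4 e2
      - (Θ q u e3 e2 * Ψ q e4 e1 + Ψ q e3 e2 * Θ q u e4 e1) = 0 := by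
    intro u
    have d31 := hΨad e3 e1 q hp
    have d42 := hΨad e4 e2 q hp
    have d32 := hΨad e3 e2 q hp
    have d41 := hΨad e4 e1 q hp
    have hLevev : (fun y => Ψ y e3 e1 * Ψ y e4 e2 - Ψ y e3 e2 * Ψ y e4 e1) =ᶠ[𝓝 q]
        (fun _ => (0 : ℂ)) := by
      filter_upwards [hqn] with y hy
      have := hLevi y hy
      rwa [hA y hy, hB y hy, hC y hy, hD y hy] at this
    have h0 : fderiv ℂ (fun y => Ψ y e3 e1 * Ψ y e4 e2 - Ψ y e3 e2 * Ψ y e4 e1) q u = 0 := by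
      rw [hLevev.fderiv_eq]; simp
    rw [fderiv_fun_sub (f := fun y => Ψ y e3 e1 * Ψ y e4 e2) (g := fun y => Ψ y e3 e2 * Ψ y e4 e1)
        (d31.mul d42) (d32.mul d41), ContinuousLinearMap.sub_apply,
      fderiv_fun_mul d31 d42, fderiv_fun_mul d32 d41] at h0
    simp only [ContinuousLinearMap.add_apply, ContinuousLinearMap.smul_apply, smul_eq_mul,
      dir2] at h0
    linear_combination h0
  set kt := fun y : ℂ × ℂ × ℂ × ℂ => -(Ψ y e3 e2) * (Ψ y e3 e1)⁻¹ with hktdef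
  set kbt := fun y : ℂ × ℂ × ℂ × ℂ => -(Ψ y e4 e1) * (Ψ y e3 e1)⁻¹ with hkbtdef
  have hktd : DifferentiableAt ℂ kt q :=
    ((hΨad e3 e2 q hp).neg).mul ((hΨad e3 e1 q hp).inv hA0)
  have hkbtd : DifferentiableAt ℂ kbt q :=
    ((hΨad e4 e1 q hp).neg).mul ((hΨad e3 e1 q hp).inv hA0)
  have hAne : ∀ᶠ y in 𝓝 q, Ψ y e3 e1 ≠ 0 :=
    (hΨad e3 e1 q hp).continuousAt.eventually_ne hA0
  have relk : ∀ u, kt q * Θ q u e3 e1 + Ψ q e3 e1 * fderiv ℂ kt q u = -Θ q u e3 e2 := by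
    intro u
    have hmulev : (fun y => kt y * Ψ y e3 e1) =ᶠ[𝓝 q] (fun y => -(Ψ y e3 e2)) := by
      filter_upwards [hAne] with y hy
      simp only [hktdef]
      field_simp
    have h0 := hmulev.fderiv_eq (𝕜 := ℂ)
    rw [fderiv_fun_mul hktd (hΨad e3 e1 q hp), fderiv_fun_neg] at h0
    have h2 := congrArg (fun L : (ℂ × ℂ × ℂ × ℂ) →L[ℂ] ℂ => L u) h0
    simp only [ContinuousLinearMap.add_apply, ContinuousLinearMap.smul_apply, smul_eq_mul,
      ContinuousLinearMap.neg_apply, dir2] at h2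
    linear_combination h2
  have relkb : ∀ u, kbt q * Θ q u e3 e1 + Ψ q e3 e1 * fderiv ℂ kbt q u = -Θ q u e4 e1 := by
    intro u
    have hmulev : (fun y => kbt y * Ψ y e3 e1) =ᶠ[𝓝 q] (fun y => -(Ψ y e4 e1)) := by
      filter_upwards [hAne] with y hy
      simp only [hkbtdef]
      field_simp
    have h0 := hmulev.fderiv_eq (𝕜 := ℂ)
    rw [fderiv_fun_mul hkbtd (hΨad e3 e1 q hp), fderiv_fun_neg] at h0
    have h2 := congrArg (fun L : (ℂ × ℂ × ℂ × ℂ) →L[ℂ] ℂ => L u) h0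
    simp only [ContinuousLinearMap.add_apply, ContinuousLinearMap.smul_apply, smul_eq_mul,
      ContinuousLinearMap.neg_apply, dir2] at h2
    linear_combination h2
  have hw : ((0 : ℂ), (0 : ℂ), kbt q, (1 : ℂ)) = kbt q • e3 + e4 := by
    simp [he3, he4, Prod.ext_iff]
  have hv : ((kt q, (1 : ℂ), (0 : ℂ), (0 : ℂ)) : ℂ × ℂ × ℂ × ℂ) = kt q • e1 + e2 := by
    simp [he1, he2, Prod.ext_iff]
  have hΘw : ∀ a b, Θ q ((0 : ℂ), (0 : ℂ), kbt q, (1 : ℂ)) a b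
      = kbt q * Θ q e3 a b + Θ q e4 a b := by
    intro a b; rw [hw, map_add, map_smul]; simp
  have hΨw : ∀ a, Ψ q ((0 : ℂ), (0 : ℂ), kbt q, (1 : ℂ)) a
      = kbt q * Ψ q e3 a + Ψ q e4 a := by
    intro a; rw [hw, map_add, map_smul]; simp
  have hΘv : ∀ a b, Θ q ((kt q, (1 : ℂ), (0 : ℂ), (0 : ℂ)) : ℂ × ℂ × ℂ × ℂ) a b
      = kt q * Θ q e1 a b + Θ q e2 a b := by
    intro a b; rw [hv, map_add, map_smul]; simp
  have hΨv : ∀ a, Ψ q ((kt q, (1 : ℂ), (0 : ℂ), (0 : ℂ)) : ℂ × ℂ × ℂ × ℂ) a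
      = kt q * Ψ q e1 a + Ψ q e2 a := by
    intro a; rw [hv, map_add, map_smul]; simp
  have gI : fderiv ℂ kt q ((0 : ℂ), (0 : ℂ), kbt q, (1 : ℂ)) = 0 := by
    have h := relk ((0 : ℂ), (0 : ℂ), kbt q, (1 : ℂ))
    rw [hΘw e3 e1, hΘw e3 e2] at h
    have hR := hRel e3
    rw [S3a e3 e4 e2, S3a e3 e4 e1] at hR
    exact alg1 (Ψ q e3 e1) (Ψ q e3 e2) (Ψ q e4 e1) (Ψ q e4 e2) (Θ q e3 e3 e1) (Θ q e3 e3 e2)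
      (Θ q e4 e3 e1) (Θ q e4 e3 e2) _ (kbt q) hA0 hLev rfl (by linear_combination hR)
      (by linear_combination h)
  have gII : fderiv ℂ kbt q ((kt q, (1 : ℂ), (0 : ℂ), (0 : ℂ)) : ℂ × ℂ × ℂ × ℂ) = 0 := by
    have h := relkb ((kt q, (1 : ℂ), (0 : ℂ), (0 : ℂ)) : ℂ × ℂ × ℂ × ℂ)
    rw [hΘv e3 e1, hΘv e4 e1] at h
    have hR := hRel e1
    -- need: Θ q e1 e4 e2 = Θ q e2 e4 e1 and Θ q e1 e3 e2 = Θ q e2 e3 e1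
    have hs1 : Θ q e1 e4 e2 = Θ q e2 e4 e1 := by
      rw [S3a e1 e4 e2, S3b e4 e1 e2, S3a e4 e2 e1]
    have hs2 : Θ q e1 e3 e2 = Θ q e2 e3 e1 := by
      rw [S3a e1 e3 e2, S3b e3 e1 e2, S3a e3 e2 e1]
    rw [hs1, hs2] at hR
    exact alg2 (Ψ q e3 e1) (Ψ q e3 e2) (Ψ q e4 e1) (Ψ q e4 e2) (Θ q e1 e3 e1) (Θ q e2 e3 e1)
      (Θ q e1 e4 e1) (Θ q e2 e4 e1) _ hA0 hLev (by linear_combination hR)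
      (by linear_combination h)
  -- derivative formulas for the last components
  have hgdiff : DifferentiableAt ℂ (fun y => -I * (kt y * Φ y e1 + Φ y e2)) q :=
    ((hktd.mul (hΦad e1 q hp)).add (hΦad e2 q hp)).const_mul (-I)
  have hhdiff : DifferentiableAt ℂ (fun y => I * (kbt y * Φ y e3 + Φ y e4)) q :=
    ((hkbtd.mul (hΦad e3 q hp)).add (hΦad e4 q hp)).const_mul I
  have hdg : ∀ u, fderiv ℂ (fun y => -I * (kt y * Φ y e1 + Φ y e2)) q u
      = -I * (kt q * Ψ q u e1 + Φ q e1 * fderiv ℂ kt q u + Ψ q u e2) := by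
    intro u
    have hd1 : DifferentiableAt ℂ (fun y => kt y * Φ y e1) q := hktd.mul (hΦad e1 q hp)
    rw [fderiv_const_mul (a := fun y => kt y * Φ y e1 + Φ y e2) (hd1.add (hΦad e2 q hp)) (-I), ContinuousLinearMap.smul_apply,
      fderiv_fun_add hd1 (hΦad e2 q hp), ContinuousLinearMap.add_apply,
      fderiv_fun_mul hktd (hΦad e1 q hp), ContinuousLinearMap.add_apply]
    simp only [ContinuousLinearMap.smul_apply, smul_eq_mul, dir1]
  have hdh : ∀ u, fderiv ℂ (fun y => I * (kbt y * Φ y e3 + Φ y e4)) q u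
      = I * (kbt q * Ψ q u e3 + Φ q e3 * fderiv ℂ kbt q u + Ψ q u e4) := by
    intro u
    have hd1 : DifferentiableAt ℂ (fun y => kbt y * Φ y e3) q := hkbtd.mul (hΦad e3 q hp)
    rw [fderiv_const_mul (a := fun y => kbt y * Φ y e3 + Φ y e4) (hd1.add (hΦad e4 q hp)) I, ContinuousLinearMap.smul_apply,
      fderiv_fun_add hd1 (hΦad e4 q hp), ContinuousLinearMap.add_apply,
      fderiv_fun_mul hkbtd (hΦad e3 q hp), ContinuousLinearMap.add_apply]
    simp only [ContinuousLinearMap.smul_apply, smul_eq_mul, dir1]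
  -- analytic local representatives of K and Kbar
  set Kt := fun p' : (ℂ × ℂ × ℂ × ℂ) × ℂ =>
    (((kt p'.1, (1 : ℂ), (0 : ℂ), (0 : ℂ)) : ℂ × ℂ × ℂ × ℂ),
      -I * (kt p'.1 * Φ p'.1 e1 + Φ p'.1 e2)) with hKtdef
  set Kbt := fun p' : (ℂ × ℂ × ℂ × ℂ) × ℂ =>
    ((((0 : ℂ), (0 : ℂ), kbt p'.1, (1 : ℂ)) : ℂ × ℂ × ℂ × ℂ),
      I * (kbt p'.1 * Φ p'.1 e3 + Φ p'.1 e4)) with hKbtdef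
  have hmem : Ω ×ˢ (Set.univ : Set ℂ) ∈ 𝓝 ((q, t) : (ℂ × ℂ × ℂ × ℂ) × ℂ) :=
    prod_mem_nhds hqn Filter.univ_mem
  have hKev : K =ᶠ[𝓝 ((q, t) : (ℂ × ℂ × ℂ × ℂ) × ℂ)] Kt := by
    filter_upwards [hmem] with p' hp'
    have hy : p'.1 ∈ Ω := hp'.1
    have hky : k p'.1 = kt p'.1 := by
      rw [hk]
      simp only [hktdef]
      rw [hB p'.1 hy, hA p'.1 hy, div_eq_mul_inv]
    rw [hK, hL1, hL2, hKtdef]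
    simp only [he1, he2, he3, he4, Prod.smul_mk, Prod.mk_add_mk, smul_eq_mul, hky,
      hp1 p'.1 hy, hp2 p'.1 hy, Prod.mk.injEq]
    and_intros <;> ring
  have hKbev : Kbar =ᶠ[𝓝 ((q, t) : (ℂ × ℂ × ℂ × ℂ) × ℂ)] Kbt := by
    filter_upwards [hmem] with p' hp'
    have hy : p'.1 ∈ Ω := hp'.1
    have hky : kbar p'.1 = kbt p'.1 := by
      rw [hkbar]
      simp only [hkbtdef]
      rw [hC p'.1 hy, hA p'.1 hy, div_eq_mul_inv]
    rw [hKbar, hL1bar, hL2bar, hKbtdef]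
    simp only [he1, he2, he3, he4, Prod.smul_mk, Prod.mk_add_mk, smul_eq_mul, hky,
      hp3 p'.1 hy, hp4 p'.1 hy, Prod.mk.injEq]
    and_intros <;> ring
  -- explicit derivatives of the representatives
  have hKtF : HasFDerivAt Kt
      ((((fderiv ℂ kt q).comp (ContinuousLinearMap.fst ℂ (ℂ × ℂ × ℂ × ℂ) ℂ)).prod 0).prod
        ((fderiv ℂ (fun y => -I * (kt y * Φ y e1 + Φ y e2)) q).comp
          (ContinuousLinearMap.fst ℂ (ℂ × ℂ × ℂ × ℂ) ℂ))) ((q, t) : (ℂ × ℂ × ℂ × ℂ) × ℂ) := by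
    rw [hKtdef]
    exact HasFDerivAt.prodMk (HasFDerivAt.prodMk (HasFDerivAt.comp (f := Prod.fst) (q, t) hktd.hasFDerivAt hasFDerivAt_fst)
      (hasFDerivAt_const _ _)) (HasFDerivAt.comp (f := Prod.fst) (q, t) hgdiff.hasFDerivAt hasFDerivAt_fst)
  have hKbtF : HasFDerivAt Kbt
      (((0 : ((ℂ × ℂ × ℂ × ℂ) × ℂ) →L[ℂ] ℂ).prod ((0 : ((ℂ × ℂ × ℂ × ℂ) × ℂ) →L[ℂ] ℂ).prod
        (((fderiv ℂ kbt q).comp (ContinuousLinearMap.fst ℂ (ℂ × ℂ × ℂ × ℂ) ℂ)).prod 0))).prod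
        ((fderiv ℂ (fun y => I * (kbt y * Φ y e3 + Φ y e4)) q).comp
          (ContinuousLinearMap.fst ℂ (ℂ × ℂ × ℂ × ℂ) ℂ))) ((q, t) : (ℂ × ℂ × ℂ × ℂ) × ℂ) := by
    rw [hKbtdef]
    exact HasFDerivAt.prodMk (HasFDerivAt.prodMk (hasFDerivAt_const _ _) (HasFDerivAt.prodMk (hasFDerivAt_const _ _)
      (HasFDerivAt.prodMk (HasFDerivAt.comp (f := Prod.fst) (q, t) hkbtd.hasFDerivAt hasFDerivAt_fst) (hasFDerivAt_const _ _))))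
      (HasFDerivAt.comp (f := Prod.fst) (q, t) hhdiff.hasFDerivAt hasFDerivAt_fst)
  -- the scalar identities at q
  have scal1 : I * (kbt q * (kt q * Ψ q e3 e1 + Ψ q e3 e2) + (kt q * Ψ q e4 e1 + Ψ q e4 e2))
      - (-I * (kt q * (kbt q * Ψ q e3 e1 + Ψ q e4 e1) + (kbt q * Ψ q e3 e2 + Ψ q e4 e2))) = 0 := by
    have h3 := alg3 (Ψ q e3 e1) (Ψ q e3 e2) (Ψ q e4 e1) (Ψ q e4 e2) hA0 hLev
    have h4 := alg4 (Ψ q e3 e1) (Ψ q e3 e2) (Ψ q e4 e1) (Ψ q e4 e2) hA0 hLev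
    simp only [hktdef, hkbtdef]
    linear_combination I * h4 + I * h3
  -- assemble
  rw [VectorField.lieBracket, hKev.fderiv_eq, hKbev.fderiv_eq, hKev.eq_of_nhds,
    hKbev.eq_of_nhds, hKtF.fderiv, hKbtF.fderiv]
  simp only [hKtdef, hKbtdef, ContinuousLinearMap.prod_apply, ContinuousLinearMap.comp_apply,
    ContinuousLinearMap.coe_fst', ContinuousLinearMap.zero_apply]
  rw [hdg, hdh, gI, gII]
  rw [hΨv e3, hΨv e4, hΨw e1, hΨw e2, S2 q hp e1 e3, S2 q hp e2 e3, S2 q hp e1 e4,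
    S2 q hp e2 e4]
  simp only [Prod.mk_sub_mk, sub_zero, zero_sub, mul_zero, add_zero, Prod.mk_eq_zero,
    neg_zero, sub_self]
  exact ⟨⟨trivial, trivial, trivial, trivial⟩, scal1⟩
end
end
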